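/- In the game of the previous construction, if some mixed strategy profile achieves expected payoff k/n for Player 1, then some pure strategy profile also achieves expected payoff at least k/n; consequently the optimal expected payoff of Player 1 equals (max number of simultaneously satisfiable clauses)/n. -/

import Mathlib

/-!
STATEMENT 3: In the 3SAT/MAXSAT gadget game, if a mixed strategy profile
achieves some expected payoff for Player 1 then some pure profile achieves at
least that payoff; consequently the optimal expected payoff of Player 1 equals
(max number of simultaneously satisfiable clauses)/n.
-/

/-- Player 1's payoff under the pure profile `(g, φ)`: the fraction of clauses
whose literal chosen by Player 2 is satisfied by Player 1's assignment. -/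
noncomputable def purePayoff {V : Type*} {m : ℕ} (C : Fin m → Fin 3 → V × Bool)
    (g : Fin m → Fin 3) (φ : V → Bool) : ℝ :=
  ((Finset.univ.filter fun c : Fin m => φ (C c (g c)).1 = (C c (g c)).2).card : ℝ) / m

theorem mixed_purification_and_value {V : Type*} [Fintype V] [DecidableEq V]
    (m : ℕ) (hm : 0 < m) (C : Fin m → Fin 3 → V × Bool) :
    (∀ (μ : (Fin m → Fin 3) → ℝ) (ν : (V → Bool) → ℝ),
        (∀ g, 0 ≤ μ g) → (∀ φ, 0 ≤ ν φ) →
        (∑ g : Fin m → Fin 3, μ g) = 1 → (∑ φ : V → Bool, ν φ) = 1 →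
        ∃ (g : Fin m → Fin 3) (φ : V → Bool),
          (∑ g' : Fin m → Fin 3, ∑ φ' : V → Bool, μ g' * ν φ' * purePayoff C g' φ') ≤
            purePayoff C g φ) ∧
      IsGreatest {r : ℝ | ∃ (g : Fin m → Fin 3) (φ : V → Bool), r = purePayoff C g φ}
        (((Finset.univ.sup fun φ : V → Bool =>
            (Finset.univ.filter fun c : Fin m => ∃ i : Fin 3, φ (C c i).1 = (C c i).2).card) : ℕ)
          / (m : ℝ)) := by
  have hm' : (0 : ℝ) < m := by exact_mod_cast hm
  constructor
  · intro μ ν hμ hν hμ1 hν1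
    obtain ⟨p, -, hp⟩ := Finset.exists_max_image
      (Finset.univ : Finset ((Fin m → Fin 3) × (V → Bool)))
      (fun p => purePayoff C p.1 p.2) ⟨(fun _ => 0, fun _ => false), Finset.mem_univ _⟩
    refine ⟨p.1, p.2, ?_⟩
    calc ∑ g' : Fin m → Fin 3, ∑ φ' : V → Bool, μ g' * ν φ' * purePayoff C g' φ'
        ≤ ∑ g' : Fin m → Fin 3, ∑ φ' : V → Bool, μ g' * ν φ' * purePayoff C p.1 p.2 := by
          refine Finset.sum_le_sum fun g _ => Finset.sum_le_sum fun φ _ => ?_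
          exact mul_le_mul_of_nonneg_left (hp (g, φ) (Finset.mem_univ _))
            (mul_nonneg (hμ g) (hν φ))
      _ = purePayoff C p.1 p.2 := by
          simp_rw [mul_assoc, ← Finset.mul_sum, ← Finset.sum_mul, hν1, one_mul, hμ1, one_mul]
  · constructor
    · obtain ⟨φ, -, hφ⟩ := Finset.exists_mem_eq_sup
        (Finset.univ : Finset (V → Bool)) ⟨fun _ => false, Finset.mem_univ _⟩
        (fun φ => (Finset.univ.filter fun c : Fin m => ∃ i : Fin 3,
          φ (C c i).1 = (C c i).2).card)
      refine ⟨fun c => if h : ∃ i : Fin 3, φ (C c i).1 = (C c i).2 then h.choose else 0,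
        φ, ?_⟩
      have hset : (Finset.univ.filter fun c : Fin m =>
          φ (C c (if h : ∃ i : Fin 3, φ (C c i).1 = (C c i).2 then h.choose else 0)).1 =
            (C c (if h : ∃ i : Fin 3, φ (C c i).1 = (C c i).2 then h.choose else 0)).2) =
          Finset.univ.filter fun c : Fin m => ∃ i : Fin 3, φ (C c i).1 = (C c i).2 := by
        ext c
        simp only [Finset.mem_filter, Finset.mem_univ, true_and]
        constructor
        · intro h
          by_cases hc : ∃ i : Fin 3, φ (C c i).1 = (C c i).2
          · exact hc
          · exact absurd ⟨_, h⟩ hc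
        · intro hc
          simp only [dif_pos hc]
          exact hc.choose_spec
      unfold purePayoff
      rw [hset, hφ]
    · rintro r ⟨g, φ, rfl⟩
      unfold purePayoff
      rw [div_le_div_iff_of_pos_right hm']
      have h2 := Finset.card_le_card
        (Finset.monotone_filter_right (Finset.univ : Finset (Fin m))
          (p := fun c : Fin m => φ (C c (g c)).1 = (C c (g c)).2)
          (q := fun c : Fin m => ∃ i : Fin 3, φ (C c i).1 = (C c i).2)
          (fun c _ hc => ⟨g c, hc⟩))
      have h3 := Finset.le_sup (f := fun φ : V → Bool => (Finset.univ.filter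
        fun c : Fin m => ∃ i : Fin 3, φ (C c i).1 = (C c i).2).card) (Finset.mem_univ φ)
      exact_mod_cast h2.trans h3
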